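/- Every unmixed bipartite graph G without isolated vertices and with bipartition (X, Y) satisfies |X| = |Y| and has a perfect matching; in particular one can label X = {x₁,...,x_n} and Y = {y₁,...,y_n} so that {x_i, y_i} is an edge of G for all i. -/

import Mathlib

/-- `C` is a vertex cover of `G`: every edge has at least one endpoint in `C`. -/
def IsVertexCover {V : Type*} (G : SimpleGraph V) (C : Finset V) : Prop :=
  ∀ a b : V, G.Adj a b → a ∈ C ∨ b ∈ C

/-- `C` is a minimal vertex cover of `G`. -/
def IsMinimalVertexCover {V : Type*} (G : SimpleGraph V) (C : Finset V) : Prop :=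
  IsVertexCover G C ∧ ∀ C' ⊂ C, ¬ IsVertexCover G C'

/-- Every vertex cover contains a minimal vertex cover. -/
lemma exists_minimal_cover {V : Type*} [DecidableEq V] (G : SimpleGraph V) :
    ∀ C : Finset V, IsVertexCover G C → ∃ D ⊆ C, IsMinimalVertexCover G D := by
  intro C
  induction C using Finset.strongInductionOn with
  | _ C ih =>
    intro h
    by_cases hm : ∀ C' ⊂ C, ¬ IsVertexCover G C'
    · exact ⟨C, subset_rfl, h, hm⟩
    · push_neg at hm
      obtain ⟨C', hsub, hc'⟩ := hm
      obtain ⟨D, hD, hmin⟩ := ih C' hsub hc'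
      exact ⟨D, hD.trans hsub.subset, hmin⟩

/-- Every unmixed bipartite graph `G` without isolated vertices and
with bipartition `(X, Y)` satisfies `|X| = |Y|` and has a perfect matching. -/
theorem stmt13 {V : Type*} [Fintype V] [DecidableEq V] (G : SimpleGraph V)
    (X Y : Finset V) (hdisj : Disjoint X Y) (hcover : X ∪ Y = Finset.univ)
    (hbip : ∀ a b : V, G.Adj a b → (a ∈ X ∧ b ∈ Y) ∨ (a ∈ Y ∧ b ∈ X))
    (hnoiso : ∀ v : V, ∃ w : V, G.Adj v w)
    (hunmixed : ∀ C C' : Finset V,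
      IsMinimalVertexCover G C → IsMinimalVertexCover G C' → C.card = C'.card) :
    X.card = Y.card ∧ ∃ M : G.Subgraph, M.IsPerfectMatching := by
  classical
  -- X is a minimal vertex cover
  have hXcov : IsVertexCover G X := by
    intro a b hab
    rcases hbip a b hab with ⟨ha, _⟩ | ⟨_, hb⟩
    · exact Or.inl ha
    · exact Or.inr hb
  have hXmin : IsMinimalVertexCover G X := by
    refine ⟨hXcov, ?_⟩
    intro C' hC' hcov'
    obtain ⟨x, hxX, hxC'⟩ := Finset.exists_of_ssubset hC'
    obtain ⟨w, hw⟩ := hnoiso x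
    have hwY : w ∈ Y := by
      rcases hbip x w hw with ⟨_, h⟩ | ⟨h, _⟩
      · exact h
      · exact absurd (hdisj.forall_ne_finset hxX h) (fun hne => hne rfl)
    rcases hcov' x w hw with h | h
    · exact hxC' h
    · exact absurd rfl (hdisj.forall_ne_finset (hC'.subset h) hwY)
  -- Y is a minimal vertex cover
  have hYcov : IsVertexCover G Y := by
    intro a b hab
    rcases hbip a b hab with ⟨_, hb⟩ | ⟨ha, _⟩
    · exact Or.inr hb
    · exact Or.inl ha
  have hYmin : IsMinimalVertexCover G Y := by
    refine ⟨hYcov, ?_⟩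
    intro C' hC' hcov'
    obtain ⟨y, hyY, hyC'⟩ := Finset.exists_of_ssubset hC'
    obtain ⟨w, hw⟩ := hnoiso y
    have hwX : w ∈ X := by
      rcases hbip y w hw with ⟨h, _⟩ | ⟨_, h⟩
      · exact absurd rfl (hdisj.forall_ne_finset h hyY)
      · exact h
    rcases hcov' y w hw with h | h
    · exact hyC' h
    · exact absurd rfl (hdisj.forall_ne_finset hwX (hC'.subset h))
  have hXY : X.card = Y.card := hunmixed X Y hXmin hYmin
  refine ⟨hXY, ?_⟩
  -- Hall's condition
  set t : {x // x ∈ X} → Finset V := fun x => Y.filter (fun y => G.Adj x y) with ht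
  have hall : ∀ s : Finset {x // x ∈ X}, s.card ≤ (s.biUnion t).card := by
    intro s
    by_contra hcon
    push_neg at hcon
    set S : Finset V := s.image Subtype.val with hS
    have hScard : S.card = s.card := Finset.card_image_of_injective s Subtype.val_injective
    have hSX : S ⊆ X := by
      intro v hv
      obtain ⟨x, _, rfl⟩ := Finset.mem_image.1 hv
      exact x.2
    set N : Finset V := s.biUnion t with hN
    set C0 : Finset V := (X \ S) ∪ N with hC0
    have hC0cov : IsVertexCover G C0 := by
      intro a b hab
      rcases hbip a b hab with ⟨ha, hb⟩ | ⟨ha, hb⟩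
      · by_cases hmem : a ∈ S
        · obtain ⟨x, hx, rfl⟩ := Finset.mem_image.1 hmem
          refine Or.inr (Finset.mem_union_right _ ?_)
          exact Finset.mem_biUnion.2 ⟨x, hx, Finset.mem_filter.2 ⟨hb, hab⟩⟩
        · exact Or.inl (Finset.mem_union_left _ (Finset.mem_sdiff.2 ⟨ha, hmem⟩))
      · by_cases hmem : b ∈ S
        · obtain ⟨x, hx, rfl⟩ := Finset.mem_image.1 hmem
          refine Or.inl (Finset.mem_union_right _ ?_)
          exact Finset.mem_biUnion.2 ⟨x, hx, Finset.mem_filter.2 ⟨ha, hab.symm⟩⟩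
        · exact Or.inr (Finset.mem_union_left _ (Finset.mem_sdiff.2 ⟨hb, hmem⟩))
    have hlt : C0.card < X.card := by
      calc C0.card ≤ (X \ S).card + N.card := Finset.card_union_le _ _
        _ < (X \ S).card + s.card := by omega
        _ = (X \ S).card + S.card := by rw [hScard]
        _ = X.card := Finset.card_sdiff_add_card_eq_card hSX
    obtain ⟨D, hDsub, hDmin⟩ := exists_minimal_cover G C0 hC0cov
    have := hunmixed D X hDmin hXmin
    have := Finset.card_le_card hDsub
    omega
  obtain ⟨f, hfinj, hf⟩ := (Finset.all_card_le_biUnion_card_iff_exists_injective t).1 hall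
  have hfY : ∀ x, f x ∈ Y := fun x => (Finset.mem_filter.1 (hf x)).1
  have hfAdj : ∀ x : {x // x ∈ X}, G.Adj (x : V) (f x) :=
    fun x => (Finset.mem_filter.1 (hf x)).2
  -- f is a bijection onto Y
  set g : {x // x ∈ X} → {y // y ∈ Y} := fun x => ⟨f x, hfY x⟩ with hg
  have hginj : Function.Injective g := fun a b h => hfinj (congrArg Subtype.val h)
  have hcard : Fintype.card {x // x ∈ X} = Fintype.card {y // y ∈ Y} := by
    simp only [Fintype.card_coe, hXY]
  have hgbij : Function.Bijective g :=
    (Fintype.bijective_iff_injective_and_card g).2 ⟨hginj, hcard⟩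
  -- Build the matching
  refine ⟨{ verts := Set.univ
            Adj := fun a b => (∃ ha : a ∈ X, f ⟨a, ha⟩ = b) ∨ (∃ hb : b ∈ X, f ⟨b, hb⟩ = a)
            adj_sub := ?_
            edge_vert := fun _ => Set.mem_univ _
            symm := ⟨fun a b h => h.symm⟩ }, ?_, fun v => Set.mem_univ v⟩
  · rintro a b (⟨ha, rfl⟩ | ⟨hb, rfl⟩)
    · exact hfAdj ⟨a, ha⟩
    · exact (hfAdj ⟨b, hb⟩).symm
  · intro v _
    have hv : v ∈ X ∪ Y := hcover ▸ Finset.mem_univ v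
    rcases Finset.mem_union.1 hv with hvX | hvY
    · refine ⟨f ⟨v, hvX⟩, Or.inl ⟨hvX, rfl⟩, ?_⟩
      rintro w (⟨ha, rfl⟩ | ⟨hw, hfw⟩)
      · rfl
      · exact absurd rfl (hdisj.forall_ne_finset hvX (hfw ▸ hfY ⟨w, hw⟩))
    · obtain ⟨x, hx⟩ := hgbij.2 ⟨v, hvY⟩
      have hxv : f x = v := congrArg Subtype.val hx
      refine ⟨(x : V), Or.inr ⟨x.2, hxv⟩, ?_⟩
      rintro w (⟨hw, rfl⟩ | ⟨hw, hfw⟩)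
      · exact absurd rfl (hdisj.forall_ne_finset hw hvY)
      · have : (⟨w, hw⟩ : {x // x ∈ X}) = x := hfinj (hfw.trans hxv.symm)
        exact congrArg Subtype.val this
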